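/- Let a ≤ 0, K₁ ≤ K₂, and let b : ℝ × ℝ → ℝ satisfy −a K₁ ≤ b(t, y) ≤ −a K₂ for all (t, y). Let h > 0 and set z = a h; assume z satisfies the coefficient inequality e^z φ_1(z) + (3/2) e^z φ_2(z) − 2 φ_2(z) + e^z φ_3(z) − 2 φ_3(z) ≥ 0 (which holds whenever h ≤ β₃/|a| for a constant β₃ ≈ 0.331). Let t_n = n h and let (y_n)_{n ≥ 0} satisfy, for n ≥ 2, the EAB₃ recursion y_{n+1} = e^{a h} y_n + h ( φ_1(a h) γ_{n1} + φ_2(a h) γ_{n2} + φ_3(a h) γ_{n3} ), where b_j = b(t_j, y_j), γ_{n1} = b_n, γ_{n2} = (3/2) b_n − 2 b_{n−1} + (1/2) b_{n−2}, γ_{n3} = b_n − 2 b_{n−1} + b_{n−2}. Set C_p = e^{a h} + 2 a h (φ_2(a h) + φ_3(a h)). If C_p K₁ ≤ e^{a h} y_2 − 2 h (φ_2(a h) + φ_3(a h)) b_1 ≤ C_p K₂, then K₁ ≤ y_n ≤ K₂ for all n ≥ 3. -/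

import Mathlib

/-- The exponential propagation functions φ_j: φ_0(z) = e^z,
φ_{j+1}(z) = (φ_j(z) - 1/j!)/z for z ≠ 0, and φ_j(0) = 1/j!. -/
noncomputable def phi : ℕ → ℝ → ℝ
  | 0, z => Real.exp z
  | j + 1, z =>
      if z = 0 then 1 / (Nat.factorial (j + 1)) else (phi j z - 1 / (Nat.factorial j)) / z

lemma phi1_id (z : ℝ) : z * phi 1 z = Real.exp z - 1 := by
  by_cases hz : z = 0
  · simp [phi, hz]
  · simp only [phi, if_neg hz, Nat.factorial]
    field_simp
    simp

lemma phi2_id (z : ℝ) : z * phi 2 z = phi 1 z - 1 := by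
  by_cases hz : z = 0
  · simp [phi, hz]
  · simp only [phi, if_neg hz, Nat.factorial]
    field_simp
    ring

lemma phi3_id (z : ℝ) : z * phi 3 z = phi 2 z - 1/2 := by
  by_cases hz : z = 0
  · norm_num [phi, hz]
  · simp only [phi, if_neg hz, Nat.factorial]
    norm_num
    field_simp

lemma exp_quad {z : ℝ} (hz : z ≤ 0) : Real.exp z ≤ 1 + z + z^2/2 := by
  have hx : 0 ≤ -z := by linarith
  have h1 : 1 + (-z) + (-z)^2/2 ≤ Real.exp (-z) := by
    have := Real.sum_le_exp_of_nonneg hx 3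
    simp [Finset.sum_range_succ, Nat.factorial] at this
    nlinarith [this]
  have h2 : Real.exp z = (Real.exp (-z))⁻¹ := by
    rw [← Real.exp_neg]; ring_nf
  rw [h2]
  rcases le_or_gt z (-1) with hc | hc
  · have hge : Real.exp (-z) ≥ 1 + (-z) := by linarith [Real.add_one_le_exp (-z)]
    have hpos : (0:ℝ) < 1 - z := by linarith
    have hinv : (Real.exp (-z))⁻¹ ≤ (1 - z)⁻¹ := by
      apply inv_anti₀ hpos; linarith
    have h3 : (1 - z)⁻¹ ≤ 1 + z + z^2/2 := by
      rw [inv_le_iff_one_le_mul₀ hpos]; nlinarith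
    linarith
  · have hq : (0:ℝ) < 1 + z + z^2/2 := by nlinarith
    rw [inv_le_iff_one_le_mul₀ (Real.exp_pos _)]
    nlinarith [h1]

lemma phi1_le_one {z : ℝ} (hz : z ≤ 0) : phi 1 z ≤ 1 := by
  rcases eq_or_lt_of_le hz with h0 | h0
  · norm_num [phi, h0]
  · by_contra hc
    push_neg at hc
    have h1 : z * phi 1 z < z * 1 := by
      exact mul_lt_mul_of_neg_left hc h0
    rw [phi1_id z] at h1
    have := Real.add_one_le_exp z
    linarith

lemma phi1_nonneg {z : ℝ} (hz : z ≤ 0) : 0 ≤ phi 1 z := by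
  rcases eq_or_lt_of_le hz with h0 | h0
  · norm_num [phi, h0]
  · by_contra hc
    push_neg at hc
    have h1 : 0 < z * phi 1 z := mul_pos_of_neg_of_neg h0 hc
    rw [phi1_id z] at h1
    have : Real.exp z ≤ Real.exp 0 := Real.exp_le_exp.mpr hz
    rw [Real.exp_zero] at this
    linarith

lemma phi1_ge {z : ℝ} (hz : z ≤ 0) : 1 + z/2 ≤ phi 1 z := by
  rcases eq_or_lt_of_le hz with h0 | h0
  · norm_num [phi, h0]
  · by_contra hc
    push_neg at hc
    have h1 : z * (1 + z/2) < z * phi 1 z := mul_lt_mul_of_neg_left hc h0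
    rw [phi1_id z] at h1
    have := exp_quad hz
    nlinarith

lemma phi2_nonneg {z : ℝ} (hz : z ≤ 0) : 0 ≤ phi 2 z := by
  rcases eq_or_lt_of_le hz with h0 | h0
  · norm_num [phi, h0]
  · by_contra hc
    push_neg at hc
    have h1 : 0 < z * phi 2 z := mul_pos_of_neg_of_neg h0 hc
    rw [phi2_id z] at h1
    linarith [phi1_le_one hz]

lemma phi2_le_half {z : ℝ} (hz : z ≤ 0) : phi 2 z ≤ 1/2 := by
  rcases eq_or_lt_of_le hz with h0 | h0
  · norm_num [phi, h0]
  · by_contra hc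
    push_neg at hc
    have h1 : z * phi 2 z < z * (1/2) := mul_lt_mul_of_neg_left hc h0
    rw [phi2_id z] at h1
    have := phi1_ge hz
    linarith

lemma phi3_nonneg {z : ℝ} (hz : z ≤ 0) : 0 ≤ phi 3 z := by
  rcases eq_or_lt_of_le hz with h0 | h0
  · norm_num [phi, h0]
  · by_contra hc
    push_neg at hc
    have h1 : 0 < z * phi 3 z := mul_pos_of_neg_of_neg h0 hc
    rw [phi3_id z] at h1
    linarith [phi2_le_half hz]

/-- Preservation of the invariant region [K₁, K₂] by the EAB₃
scheme for y' = a y + b(t,y) with a ≤ 0 and −aK₁ ≤ b ≤ −aK₂, under the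
coefficient inequality on z = a h and a condition on the initial data. -/
theorem eab3_invariant_region (a h K₁ K₂ : ℝ) (ha : a ≤ 0) (hK : K₁ ≤ K₂)
    (hh : 0 < h)
    (hcoef : 0 ≤ Real.exp (a * h) * phi 1 (a * h)
        + (3 / 2) * Real.exp (a * h) * phi 2 (a * h) - 2 * phi 2 (a * h)
        + Real.exp (a * h) * phi 3 (a * h) - 2 * phi 3 (a * h))
    (b : ℝ → ℝ → ℝ) (hb : ∀ t y, -a * K₁ ≤ b t y ∧ b t y ≤ -a * K₂)
    (y : ℕ → ℝ)
    (hrec : ∀ n, 2 ≤ n →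
      y (n + 1) = Real.exp (a * h) * y n
        + h * (phi 1 (a * h) * b ((n : ℝ) * h) (y n)
             + phi 2 (a * h) * ((3 / 2) * b ((n : ℝ) * h) (y n)
                 - 2 * b (((n - 1 : ℕ) : ℝ) * h) (y (n - 1))
                 + (1 / 2) * b (((n - 2 : ℕ) : ℝ) * h) (y (n - 2)))
             + phi 3 (a * h) * (b ((n : ℝ) * h) (y n)
                 - 2 * b (((n - 1 : ℕ) : ℝ) * h) (y (n - 1))
                 + b (((n - 2 : ℕ) : ℝ) * h) (y (n - 2)))))
    (hinit₁ : (Real.exp (a * h) + 2 * (a * h) * (phi 2 (a * h) + phi 3 (a * h))) * K₁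
        ≤ Real.exp (a * h) * y 2
          - 2 * h * (phi 2 (a * h) + phi 3 (a * h)) * b ((1 : ℝ) * h) (y 1))
    (hinit₂ : Real.exp (a * h) * y 2
          - 2 * h * (phi 2 (a * h) + phi 3 (a * h)) * b ((1 : ℝ) * h) (y 1)
        ≤ (Real.exp (a * h) + 2 * (a * h) * (phi 2 (a * h) + phi 3 (a * h))) * K₂) :
    ∀ n, 3 ≤ n → K₁ ≤ y n ∧ y n ≤ K₂ := by
  have hz0 : a * h ≤ 0 := mul_nonpos_iff.mpr (Or.inr ⟨ha, hh.le⟩)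
  set z := a * h with hzdef
  set E := Real.exp z with hEdef
  set p1 := phi 1 z with hp1def
  set p2 := phi 2 z with hp2def
  set p3 := phi 3 z with hp3def
  have hEpos : 0 < E := Real.exp_pos z
  have I1 : z * p1 = E - 1 := phi1_id z
  have h1n : 0 ≤ p1 := phi1_nonneg hz0
  have h2n : 0 ≤ p2 := phi2_nonneg hz0
  have h3n : 0 ≤ p3 := phi3_nonneg hz0
  have hbl : ∀ t u, -z * K₁ ≤ h * b t u := by
    intro t u
    rw [hzdef]
    have h1 := mul_le_mul_of_nonneg_left (hb t u).1 hh.le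
    nlinarith [h1]
  have hbu : ∀ t u, h * b t u ≤ -z * K₂ := by
    intro t u
    rw [hzdef]
    have h1 := mul_le_mul_of_nonneg_left (hb t u).2 hh.le
    nlinarith [h1]
  have hd0 : 0 ≤ E * p1 + (3 / 2) * E * p2 - 2 * p2 + E * p3 - 2 * p3 := by
    linarith [hcoef]
  have hd2 : 0 ≤ E * (p2 / 2 + p3) := by
    apply mul_nonneg hEpos.le; linarith
  have hc1 : 0 ≤ p1 + (3 / 2) * p2 + p3 := by linarith
  have hc2 : 0 ≤ p2 / 2 + p3 := by linarith
  have idA : ∀ K : ℝ, (E + 2 * z * (p2 + p3)) * K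
      + (p1 + (3 / 2) * p2 + p3) * (-z * K) + (p2 / 2 + p3) * (-z * K) = K := by
    intro K; linear_combination (-K) * I1
  have idB : ∀ K : ℝ, E * ((E + 2 * z * (p2 + p3)) * K)
      + (E * p1 + (3 / 2) * E * p2 - 2 * p2 + E * p3 - 2 * p3) * (-z * K)
      + (E * (p2 / 2 + p3)) * (-z * K) = (E + 2 * z * (p2 + p3)) * K := by
    intro K; linear_combination (-(E * K)) * I1
  have Q : ∀ n, 2 ≤ n →
      (E + 2 * z * (p2 + p3)) * K₁
        ≤ E * y n - 2 * h * (p2 + p3) * b (((n - 1 : ℕ) : ℝ) * h) (y (n - 1))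
      ∧ E * y n - 2 * h * (p2 + p3) * b (((n - 1 : ℕ) : ℝ) * h) (y (n - 1))
        ≤ (E + 2 * z * (p2 + p3)) * K₂ := by
    intro n hn
    induction n, hn using Nat.le_induction with
    | base =>
        simp only [show (2 : ℕ) - 1 = 1 from rfl, Nat.cast_one, one_mul]
        simp only [one_mul] at hinit₁ hinit₂
        exact ⟨hinit₁, hinit₂⟩
    | succ n hn ih =>
        obtain ⟨ih1, ih2⟩ := ih
        have hy := hrec n hn
        simp only [Nat.add_sub_cancel]
        rw [hy]
        have f1l := mul_le_mul_of_nonneg_left ih1 hEpos.le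
        have f1u := mul_le_mul_of_nonneg_left ih2 hEpos.le
        have f2l := mul_le_mul_of_nonneg_left (hbl ((n : ℝ) * h) (y n)) hd0
        have f2u := mul_le_mul_of_nonneg_left (hbu ((n : ℝ) * h) (y n)) hd0
        have f3l := mul_le_mul_of_nonneg_left
          (hbl (((n - 2 : ℕ) : ℝ) * h) (y (n - 2))) hd2
        have f3u := mul_le_mul_of_nonneg_left
          (hbu (((n - 2 : ℕ) : ℝ) * h) (y (n - 2))) hd2
        constructor
        · linarith [idB K₁, f1l, f2l, f3l]
        · linarith [idB K₂, f1u, f2u, f3u]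
  intro n hn
  obtain ⟨m, rfl⟩ : ∃ m, n = m + 1 := ⟨n - 1, by omega⟩
  have hm : 2 ≤ m := by omega
  obtain ⟨q1, q2⟩ := Q m hm
  have hy := hrec m hm
  rw [hy]
  have g2l := mul_le_mul_of_nonneg_left (hbl ((m : ℝ) * h) (y m)) hc1
  have g2u := mul_le_mul_of_nonneg_left (hbu ((m : ℝ) * h) (y m)) hc1
  have g3l := mul_le_mul_of_nonneg_left
    (hbl (((m - 2 : ℕ) : ℝ) * h) (y (m - 2))) hc2
  have g3u := mul_le_mul_of_nonneg_left
    (hbu (((m - 2 : ℕ) : ℝ) * h) (y (m - 2))) hc2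
  constructor
  · linarith [idA K₁, q1, g2l, g3l]
  · linarith [idA K₂, q2, g2u, g3u]
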